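/- arXiv:0705.4561 — 4 statements merged into one kernel-verified Lean document; each statement's English description precedes it below -/
import Mathlib

section
/- Let P : ℝ^d → Mat_N(ℂ) be a smooth matrix-valued function all of whose derivatives are bounded. Then λ ∈ Σ_∞(P) if and only if λ is a limit of eigenvalues of P at infinity, i.e., there exist a sequence w_j ∈ ℝ^d with |w_j| → ∞ and complex numbers μ_j with det(P(w_j) − μ_j I) = 0 for every j and μ_j → λ as j → ∞. -/
open Filter Topology Polynomial
open scoped NNReal

/-- `Σ_∞(P)`: the set of `λ ∈ ℂ` for which there exist `w_j ∈ ℝ^d` with `|w_j| → ∞`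
and nonzero `u_j ∈ ℂ^N` with `|P(w_j)u_j − λu_j|/|u_j| → 0` as `j → ∞`. -/
def SigmaInf {d N : ℕ} (P : EuclideanSpace ℝ (Fin d) → Matrix (Fin N) (Fin N) ℂ) : Set ℂ :=
  {z : ℂ | ∃ (w : ℕ → EuclideanSpace ℝ (Fin d)) (u : ℕ → EuclideanSpace ℂ (Fin N)),
    (∀ j, u j ≠ 0) ∧
    Tendsto (fun j => ‖w j‖) atTop atTop ∧
    Tendsto (fun j => ‖Matrix.toEuclideanLin (P (w j)) (u j) - z • u j‖ / ‖u j‖)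
      atTop (nhds 0)}

namespace SigmaInfAux

lemma coord_le {N : ℕ} (v : EuclideanSpace ℂ (Fin N)) (k : Fin N) : ‖v k‖ ≤ ‖v‖ := by
  rw [EuclideanSpace.norm_eq]
  calc ‖v k‖ = Real.sqrt (‖v k‖ ^ 2) := (Real.sqrt_sq (norm_nonneg _)).symm
    _ ≤ _ := Real.sqrt_le_sqrt (Finset.single_le_sum
        (f := fun i => ‖v i‖ ^ 2) (fun i _ => sq_nonneg _) (Finset.mem_univ k))

lemma opbound {N : ℕ} (M : Matrix (Fin N) (Fin N) ℂ) {c : ℝ} (hc : 0 ≤ c)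
    (h : ∀ i j, ‖M i j‖ ≤ c) (v : EuclideanSpace ℂ (Fin N)) :
    ‖Matrix.toEuclideanLin M v‖ ≤ (N * N) * c * ‖v‖ := by
  have hco : ∀ i : Fin N, ‖(Matrix.toEuclideanLin M v) i‖ ≤ (N * c) * ‖v‖ := by
    intro i
    have he : (Matrix.toEuclideanLin M v) i = ∑ k, M i k * v k := by
      simp [Matrix.toEuclideanLin_apply, Matrix.mulVec, dotProduct]
    rw [he]
    calc ‖∑ k, M i k * v k‖ ≤ ∑ k : Fin N, ‖M i k * v k‖ := norm_sum_le _ _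
      _ ≤ ∑ _k : Fin N, c * ‖v‖ := by
          refine Finset.sum_le_sum fun k _ => ?_
          rw [norm_mul]
          exact mul_le_mul (h i k) (coord_le v k) (norm_nonneg _) hc
      _ = (N * c) * ‖v‖ := by simp [mul_assoc]
  have h1 : ‖Matrix.toEuclideanLin M v‖ ≤ Real.sqrt (∑ _i : Fin N, ((N * c) * ‖v‖) ^ 2) := by
    rw [EuclideanSpace.norm_eq]
    exact Real.sqrt_le_sqrt (Finset.sum_le_sum fun i _ =>
      pow_le_pow_left₀ (norm_nonneg _) (hco i) 2)
  have hN2 : (N : ℝ) ≤ (N : ℝ) ^ 2 := by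
    exact_mod_cast Nat.le_self_pow two_ne_zero N
  calc ‖Matrix.toEuclideanLin M v‖ ≤ Real.sqrt ((N : ℝ) * ((N * c) * ‖v‖) ^ 2) := by
        simpa using h1
    _ ≤ Real.sqrt ((N : ℝ) ^ 2 * ((N * c) * ‖v‖) ^ 2) :=
        Real.sqrt_le_sqrt (mul_le_mul_of_nonneg_right hN2 (sq_nonneg _))
    _ = (N : ℝ) * ((N * c) * ‖v‖) := by
        rw [← mul_pow, Real.sqrt_sq (by positivity)]
    _ = (N * N) * c * ‖v‖ := by ring

lemma norm_det_le {N : ℕ} (M : Matrix (Fin N) (Fin N) ℂ) {b : ℝ} (hb : 0 ≤ b)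
    (h : ∀ i j, ‖M i j‖ ≤ b) : ‖M.det‖ ≤ (N.factorial : ℝ) * b ^ N := by
  rw [Matrix.det_apply]
  calc ‖∑ σ : Equiv.Perm (Fin N), Equiv.Perm.sign σ • ∏ i, M (σ i) i‖
      ≤ ∑ σ : Equiv.Perm (Fin N), ‖Equiv.Perm.sign σ • ∏ i, M (σ i) i‖ := norm_sum_le _ _
    _ ≤ ∑ _σ : Equiv.Perm (Fin N), b ^ N := by
        refine Finset.sum_le_sum fun σ _ => ?_
        have h1 : ‖Equiv.Perm.sign σ • ∏ i, M (σ i) i‖ = ‖∏ i, M (σ i) i‖ := by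
          rcases Int.units_eq_one_or (Equiv.Perm.sign σ) with h' | h' <;> simp [h']
        rw [h1, norm_prod]
        calc ∏ i, ‖M (σ i) i‖ ≤ ∏ _i : Fin N, b :=
              Finset.prod_le_prod (fun i _ => norm_nonneg _) (fun i _ => h (σ i) i)
          _ = b ^ N := by simp
    _ = (N.factorial : ℝ) * b ^ N := by
        simp [Finset.sum_const, Finset.card_univ, Fintype.card_perm]

lemma norm_adjugate_le {N : ℕ} (M : Matrix (Fin N) (Fin N) ℂ) {b : ℝ}
    (h : ∀ i j, ‖M i j‖ ≤ b) (i j : Fin N) :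
    ‖M.adjugate i j‖ ≤ (N.factorial : ℝ) * (max b 1) ^ N := by
  rw [Matrix.adjugate_apply]
  refine norm_det_le _ (le_trans zero_le_one (le_max_right b 1)) fun i' j' => ?_
  rw [Matrix.updateRow_apply]
  by_cases hi : i' = j
  · simp only [hi, if_pos rfl]
    by_cases hj : j' = i <;> simp [Pi.single_apply, hj]
  · simp only [if_neg hi]
    exact le_trans (h i' j') (le_max_left _ _)

lemma toEuclideanLin_adjugate_apply {N : ℕ} (B : Matrix (Fin N) (Fin N) ℂ)
    (u : EuclideanSpace ℂ (Fin N)) :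
    Matrix.toEuclideanLin B.adjugate (Matrix.toEuclideanLin B u) = B.det • u := by
  simp only [Matrix.toEuclideanLin_apply]
  simp [Matrix.mulVec_mulVec, Matrix.adjugate_mul, Matrix.smul_mulVec,
    Matrix.one_mulVec]

lemma toEuclideanLin_sub_smul {N : ℕ} (A : Matrix (Fin N) (Fin N) ℂ) (lam : ℂ)
    (u : EuclideanSpace ℂ (Fin N)) :
    Matrix.toEuclideanLin (A - lam • 1) u = Matrix.toEuclideanLin A u - lam • u := by
  simp only [Matrix.toEuclideanLin_apply]
  simp [Matrix.sub_mulVec, Matrix.smul_mulVec, Matrix.one_mulVec]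

lemma eval_charpoly' {N : ℕ} (M : Matrix (Fin N) (Fin N) ℂ) (t : ℂ) :
    (M.charpoly).eval t = (t • (1 : Matrix (Fin N) (Fin N) ℂ) - M).det := by
  rw [Matrix.charpoly, eval_det, Matrix.matPolyEquiv_charmatrix]
  simp [Matrix.smul_one_eq_diagonal]

/-- A uniform constant. -/
noncomputable def Kc (N : ℕ) (c : ℝ) (lam : ℂ) : ℝ :=
  (N * N : ℝ) * ((N.factorial : ℝ) * (max (c + ‖lam‖) 1) ^ N)

lemma Kc_nonneg (N : ℕ) (c : ℝ) (lam : ℂ) : 0 ≤ Kc N c lam := by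
  unfold Kc; positivity

lemma forward_key {N : ℕ} (hN : 0 < N) (A : Matrix (Fin N) (Fin N) ℂ) {c : ℝ}
    (hA : ∀ i j, ‖A i j‖ ≤ c) (lam : ℂ) (u : EuclideanSpace ℂ (Fin N)) (hu : u ≠ 0) :
    ∃ μ : ℂ, (A - μ • (1 : Matrix (Fin N) (Fin N) ℂ)).det = 0 ∧
      ‖lam - μ‖ ^ N ≤ Kc N c lam * (‖Matrix.toEuclideanLin A u - lam • u‖ / ‖u‖) := by
  set B := A - lam • (1 : Matrix (Fin N) (Fin N) ℂ) with hB
  have hBent : ∀ i j, ‖B i j‖ ≤ c + ‖lam‖ := by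
    intro i j
    have : B i j = A i j - lam * (1 : Matrix (Fin N) (Fin N) ℂ) i j := by
      simp [hB, Matrix.sub_apply]
    rw [this]
    refine le_trans (norm_sub_le _ _) (add_le_add (hA i j) ?_)
    rw [norm_mul, Matrix.one_apply]
    by_cases hij : i = j <;> simp [hij]
  have hcard : A.charpoly.roots.card = N := by
    have h1 : A.charpoly.natDegree = N := by
      rw [Matrix.charpoly_natDegree_eq_dim]; simp
    have h2 := Polynomial.splits_iff_card_roots.mp (IsAlgClosed.splits A.charpoly)
    rw [h2, h1]
  have hne : A.charpoly.roots.toFinset.Nonempty := by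
    rw [Multiset.toFinset_nonempty]
    intro h0
    rw [h0] at hcard
    simp at hcard
    omega
  obtain ⟨μ, hμmem, hμmin⟩ := A.charpoly.roots.toFinset.exists_min_image
    (fun x => ‖lam - x‖₊) hne
  refine ⟨μ, ?_, ?_⟩
  · have hroot : A.charpoly.eval μ = 0 := by
      have := Multiset.mem_toFinset.mp hμmem
      exact (Polynomial.mem_roots (Matrix.charpoly_monic A).ne_zero).mp this
    rw [eval_charpoly'] at hroot
    have : (A - μ • (1 : Matrix (Fin N) (Fin N) ℂ)) = -(μ • 1 - A) := (neg_sub _ _).symm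
    rw [this, Matrix.det_neg, hroot, mul_zero]
  · have hdetprod : ‖B.det‖₊ = ((A.charpoly.roots).map (fun x => ‖lam - x‖₊)).prod := by
      have h1 : B.det = (-1) ^ N * (A.charpoly.eval lam) := by
        rw [eval_charpoly']
        have : B = -(lam • (1 : Matrix (Fin N) (Fin N) ℂ) - A) := (neg_sub _ _).symm
        rw [this, Matrix.det_neg]
        simp
      have h2 : A.charpoly.eval lam = ((A.charpoly.roots).map (fun x => lam - x)).prod := by
        conv_lhs => rw [(IsAlgClosed.splits A.charpoly).eq_prod_roots_of_monic
          A.charpoly_monic]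
        rw [Polynomial.eval_multiset_prod, Multiset.map_map]
        simp
      rw [h1, h2]
      rw [nnnorm_mul]
      have : ‖((-1 : ℂ)) ^ N‖₊ = 1 := by simp
      rw [this, one_mul]
      have h3 := map_multiset_prod (nnnormHom : ℂ →*₀ ℝ≥0).toMonoidHom
        (Multiset.map (fun x => lam - x) A.charpoly.roots)
      rw [Multiset.map_map] at h3
      exact h3
    have hpow : (‖lam - μ‖₊ : ℝ≥0) ^ N ≤ ‖B.det‖₊ := by
      rw [hdetprod]
      have hcm : Multiset.card (Multiset.map (fun x => ‖lam - x‖₊) A.charpoly.roots) = N := by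
        rw [Multiset.card_map, hcard]
      have hle := Multiset.pow_card_le_prod
        (s := Multiset.map (fun x => ‖lam - x‖₊) A.charpoly.roots) (a := ‖lam - μ‖₊) ?_
      · rwa [hcm] at hle
      · intro x hx
        obtain ⟨y, hy, rfl⟩ := Multiset.mem_map.mp hx
        exact hμmin y (Multiset.mem_toFinset.mpr hy)
    have hu' : (0 : ℝ) < ‖u‖ := norm_pos_iff.mpr hu
    have hadj := norm_adjugate_le B hBent
    have hop := opbound B.adjugate
      (c := (N.factorial : ℝ) * (max (c + ‖lam‖) 1) ^ N) (by positivity) hadj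
      (Matrix.toEuclideanLin B u)
    rw [toEuclideanLin_adjugate_apply] at hop
    rw [norm_smul] at hop
    have hBu : Matrix.toEuclideanLin B u = Matrix.toEuclideanLin A u - lam • u :=
      toEuclideanLin_sub_smul A lam u
    rw [hBu] at hop
    have hdet_le : ‖B.det‖ ≤ Kc N c lam * (‖Matrix.toEuclideanLin A u - lam • u‖ / ‖u‖) := by
      rw [Kc, mul_div_assoc']
      rw [le_div_iff₀ hu']
      calc ‖B.det‖ * ‖u‖ ≤ _ := hop
        _ = _ := by ring
    refine le_trans ?_ hdet_le
    exact_mod_cast (NNReal.coe_le_coe.mpr hpow)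

end SigmaInfAux

open SigmaInfAux

/-- **Proposition 2.4.** If `P ∈ C_b^∞(ℝ^d, Mat_N(ℂ))` (smooth with all derivatives bounded),
then `λ ∈ Σ_∞(P)` if and only if `λ` is a limit of eigenvalues of `P` at infinity. -/
theorem sigmaInf_iff_limit_of_eigenvalues {d N : ℕ}
    (P : EuclideanSpace ℝ (Fin d) → Matrix (Fin N) (Fin N) ℂ)
    (hsmooth : ∀ i j, ContDiff ℝ (⊤ : ℕ∞) fun w => P w i j)
    (hbdd : ∀ (i j : Fin N) (n : ℕ), ∃ C : ℝ,
      ∀ w, ‖iteratedFDeriv ℝ n (fun w => P w i j) w‖ ≤ C)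
    (lam : ℂ) :
    lam ∈ SigmaInf P ↔
      ∃ (w : ℕ → EuclideanSpace ℝ (Fin d)) (mu : ℕ → ℂ),
        Tendsto (fun j => ‖w j‖) atTop atTop ∧
        (∀ j, (P (w j) - mu j • (1 : Matrix (Fin N) (Fin N) ℂ)).det = 0) ∧
        Tendsto mu atTop (nhds lam) := by
  rcases Nat.eq_zero_or_pos N with hN0 | hN
  · subst hN0
    constructor
    · rintro ⟨w, u, hu, -, -⟩
      refine absurd ?_ (hu 0)
      exact Subsingleton.elim _ _
    · rintro ⟨w, mu, -, hdet, -⟩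
      have h1 := hdet 0
      rw [Matrix.det_fin_zero] at h1
      exact absurd h1 one_ne_zero
  constructor
  · rintro ⟨w, u, hu, hw, hconv⟩
    obtain ⟨C, hC⟩ : ∃ C : Fin N → Fin N → ℝ, ∀ i k x, ‖P x i k‖ ≤ C i k := by
      choose C hC using fun i k => hbdd i k 0
      refine ⟨C, fun i k x => ?_⟩
      have := hC i k x
      rwa [norm_iteratedFDeriv_zero] at this
    set c : ℝ := ∑ i, ∑ k, max (C i k) 0 with hc
    have hcb : ∀ (x) (i k : Fin N), ‖P x i k‖ ≤ c := by
      intro x i k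
      refine le_trans (le_trans (hC i k x) (le_max_left (C i k) (0:ℝ))) ?_
      calc max (C i k) 0 ≤ ∑ k', max (C i k') 0 :=
            Finset.single_le_sum (f := fun k' => max (C i k') 0)
              (fun k' _ => le_max_right _ _) (Finset.mem_univ k)
        _ ≤ c := Finset.single_le_sum (f := fun i' => ∑ k', max (C i' k') 0)
            (fun i' _ => Finset.sum_nonneg fun k' _ => le_max_right _ _) (Finset.mem_univ i)
    have hkey : ∀ j, ∃ μ : ℂ, (P (w j) - μ • (1 : Matrix (Fin N) (Fin N) ℂ)).det = 0 ∧
        ‖lam - μ‖ ^ N ≤ Kc N c lam *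
          (‖Matrix.toEuclideanLin (P (w j)) (u j) - lam • u j‖ / ‖u j‖) :=
      fun j => forward_key hN _ (fun i k => hcb (w j) i k) lam (u j) (hu j)
    choose mu hdet hle using hkey
    refine ⟨w, mu, hw, hdet, ?_⟩
    have ht : Tendsto (fun j => Kc N c lam *
        (‖Matrix.toEuclideanLin (P (w j)) (u j) - lam • u j‖ / ‖u j‖)) atTop (nhds 0) := by
      simpa using hconv.const_mul (Kc N c lam)
    rw [Metric.tendsto_atTop]
    intro ε hε
    have hεN : (0 : ℝ) < ε ^ N := pow_pos hε N
    obtain ⟨J, hJ⟩ := eventually_atTop.mp (ht.eventually (gt_mem_nhds hεN))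
    refine ⟨J, fun j hj => ?_⟩
    have h1 : ‖lam - mu j‖ ^ N < ε ^ N := lt_of_le_of_lt (hle j) (hJ j hj)
    have h2 : ‖lam - mu j‖ < ε := lt_of_pow_lt_pow_left₀ N hε.le h1
    rwa [dist_eq_norm, norm_sub_rev]
  · rintro ⟨w, mu, hw, hdet, hmu⟩
    have hv : ∀ j, ∃ v : Fin N → ℂ, v ≠ 0 ∧
        (P (w j) - mu j • (1 : Matrix (Fin N) (Fin N) ℂ)).mulVec v = 0 := by
      intro j
      obtain ⟨v, hv0, hveq⟩ := Matrix.exists_mulVec_eq_zero_iff.mpr (hdet j)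
      exact ⟨v, hv0, hveq⟩
    choose v hv0 hveq using hv
    set u : ℕ → EuclideanSpace ℂ (Fin N) := fun j => (WithLp.equiv 2 (Fin N → ℂ)).symm (v j)
      with hu
    have hu0 : ∀ j, u j ≠ 0 := by
      intro j h
      apply hv0 j
      have := congrArg (WithLp.equiv 2 (Fin N → ℂ)) h
      simpa [hu] using this
    refine ⟨w, u, hu0, hw, ?_⟩
    have heq : ∀ j, Matrix.toEuclideanLin (P (w j)) (u j) - lam • u j
        = (mu j - lam) • u j := by
      intro j
      have h2 : Matrix.toEuclideanLin (P (w j) - mu j • (1 : Matrix (Fin N) (Fin N) ℂ)) (u j)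
          = 0 := by
        rw [Matrix.toEuclideanLin_apply]
        have : (u j).ofLp = v j := by simp [hu]
        rw [this, hveq j]
        simp
      rw [toEuclideanLin_sub_smul] at h2
      have h3 : Matrix.toEuclideanLin (P (w j)) (u j) = mu j • u j := by
        rwa [sub_eq_zero] at h2
      rw [h3, ← sub_smul]
    have hrw : ∀ j, ‖Matrix.toEuclideanLin (P (w j)) (u j) - lam • u j‖ / ‖u j‖
        = ‖mu j - lam‖ := by
      intro j
      rw [heq j, norm_smul, mul_div_assoc, div_self (norm_ne_zero_iff.mpr (hu0 j)), mul_one]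
    have hlim : Tendsto (fun j => ‖mu j - lam‖) atTop (nhds 0) := by
      have h4 : Tendsto (fun j => mu j - lam) atTop (nhds 0) := by
        simpa using hmu.sub_const lam
      simpa using h4.norm
    simpa only [hrw] using hlim
end

section
/- Let Q be an N×N complex matrix such that Im(zQ) ≥ 0 for some nonzero z ∈ ℂ. Then Ker Q = Ker Q* = Ker(Re Q) ∩ Ker(Im Q), and Ran Q = Ran(Re Q) + Ran(Im Q) = (Ker Q)^⊥, the orthogonal complement of Ker Q in ℂ^N. -/
open ComplexOrder Matrix

/-- The symmetric (real) part `Re A = (A + A*)/2` of a matrix. -/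
noncomputable def matRe {N : ℕ} (A : Matrix (Fin N) (Fin N) ℂ) : Matrix (Fin N) (Fin N) ℂ :=
  (2 : ℂ)⁻¹ • (A + Aᴴ)

/-- The antisymmetric (imaginary) part `Im A = (A − A*)/(2i)` of a matrix. -/
noncomputable def matIm {N : ℕ} (A : Matrix (Fin N) (Fin N) ℂ) : Matrix (Fin N) (Fin N) ℂ :=
  (2 * Complex.I)⁻¹ • (A - Aᴴ)

lemma matRe_isHermitian {N : ℕ} (A : Matrix (Fin N) (Fin N) ℂ) : (matRe A).IsHermitian := by
  unfold matRe Matrix.IsHermitian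
  rw [conjTranspose_smul, conjTranspose_add, conjTranspose_conjTranspose]
  simp [add_comm]

lemma matIm_isHermitian {N : ℕ} (A : Matrix (Fin N) (Fin N) ℂ) : (matIm A).IsHermitian := by
  unfold matIm Matrix.IsHermitian
  rw [conjTranspose_smul, conjTranspose_sub, conjTranspose_conjTranspose]
  have : star ((2 * Complex.I)⁻¹) = -(2 * Complex.I)⁻¹ := by
    simp [map_inv₀]
  rw [this, neg_smul, ← smul_neg, neg_sub]

lemma matRe_add_I_smul_matIm {N : ℕ} (A : Matrix (Fin N) (Fin N) ℂ) :
    matRe A + Complex.I • matIm A = A := by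
  unfold matRe matIm
  rw [smul_smul]
  have h : Complex.I * (2 * Complex.I)⁻¹ = (2:ℂ)⁻¹ := by
    field_simp
  rw [h, ← smul_add]
  have : (A + Aᴴ) + (A - Aᴴ) = (2:ℂ) • A := by
    ext i j; simp [Matrix.add_apply, Matrix.sub_apply]; ring
  rw [this, smul_smul]
  norm_num

lemma key_iff {N : ℕ} (Q : Matrix (Fin N) (Fin N) ℂ)
    (h : ∃ z : ℂ, z ≠ 0 ∧ (matIm (z • Q)).PosSemidef) (x : Fin N → ℂ) :
    Q *ᵥ x = 0 ↔ Qᴴ *ᵥ x = 0 := by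
  obtain ⟨z, hz, hpsd⟩ := h
  have hB : matIm (z • Q) = (2 * Complex.I)⁻¹ • (z • Q - star z • Qᴴ) := by
    unfold matIm; rw [conjTranspose_smul]
  have hconj : star x ⬝ᵥ Qᴴ *ᵥ x = star (star x ⬝ᵥ Q *ᵥ x) := by
    rw [star_dotProduct, star_mulVec, conjTranspose_conjTranspose, ← dotProduct_mulVec]
  have main : star x ⬝ᵥ Q *ᵥ x = 0 →
      z • (Q *ᵥ x) = star z • (Qᴴ *ᵥ x) := by
    intro hc
    have h0 : star x ⬝ᵥ (matIm (z • Q)) *ᵥ x = 0 := by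
      rw [hB, smul_mulVec, sub_mulVec, smul_mulVec, smul_mulVec,
        dotProduct_smul, dotProduct_sub, dotProduct_smul, dotProduct_smul, hc, hconj, hc]
      simp
    have h1 := (hpsd.dotProduct_mulVec_zero_iff x).mp h0
    rw [hB, smul_mulVec, sub_mulVec, smul_mulVec, smul_mulVec,
      smul_eq_zero] at h1
    rcases h1 with h1 | h1
    · exact absurd h1 (by simp [Complex.I_ne_zero])
    · exact sub_eq_zero.mp h1
  constructor
  · intro hQ
    have hc : star x ⬝ᵥ Q *ᵥ x = 0 := by rw [hQ, dotProduct_zero]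
    have := main hc
    rw [hQ, smul_zero] at this
    have hzs : star z ≠ 0 := star_ne_zero.mpr hz
    exact (smul_eq_zero.mp this.symm).resolve_left hzs
  · intro hQ
    have hc : star x ⬝ᵥ Q *ᵥ x = 0 := by
      have : star x ⬝ᵥ Qᴴ *ᵥ x = 0 := by rw [hQ, dotProduct_zero]
      rw [hconj] at this
      simpa using congrArg star this
    have := main hc
    rw [hQ, smul_zero] at this
    exact (smul_eq_zero.mp this).resolve_left hz

lemma ortho_range {N : ℕ} (T : EuclideanSpace ℂ (Fin N) →ₗ[ℂ] EuclideanSpace ℂ (Fin N)) :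
    (LinearMap.range T)ᗮ = LinearMap.ker (LinearMap.adjoint T) := by
  ext x
  simp only [Submodule.mem_orthogonal, LinearMap.mem_ker, LinearMap.mem_range,
    forall_exists_index]
  constructor
  · intro hx
    have h2 : ∀ y, inner ℂ y (LinearMap.adjoint T x) = (0:ℂ) := fun y => by
      rw [LinearMap.adjoint_inner_right]
      exact hx _ y rfl
    have := h2 (LinearMap.adjoint T x)
    rwa [inner_self_eq_zero] at this
  · rintro hx u y rfl
    rw [← LinearMap.adjoint_inner_right, hx, inner_zero_right]

lemma range_eq_ortho_ker_adjoint {N : ℕ}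
    (T : EuclideanSpace ℂ (Fin N) →ₗ[ℂ] EuclideanSpace ℂ (Fin N)) :
    LinearMap.range T = (LinearMap.ker (LinearMap.adjoint T))ᗮ := by
  rw [← ortho_range, Submodule.orthogonal_orthogonal]

/-- **Lemma 4.6.** If `Q` is an `N × N` complex matrix such that `Im (zQ) ≥ 0` for some
`z ≠ 0`, then `Ker Q = Ker Q* = Ker (Re Q) ∩ Ker (Im Q)`, and
`Ran Q = Ran (Re Q) + Ran (Im Q)` is the orthogonal complement of `Ker Q`. -/
theorem ker_range_of_semibounded {N : ℕ} (Q : Matrix (Fin N) (Fin N) ℂ)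
    (h : ∃ z : ℂ, z ≠ 0 ∧ (matIm (z • Q)).PosSemidef) :
    LinearMap.ker (Matrix.toEuclideanLin Q) = LinearMap.ker (Matrix.toEuclideanLin Qᴴ) ∧
    LinearMap.ker (Matrix.toEuclideanLin Q) =
      LinearMap.ker (Matrix.toEuclideanLin (matRe Q)) ⊓
        LinearMap.ker (Matrix.toEuclideanLin (matIm Q)) ∧
    LinearMap.range (Matrix.toEuclideanLin Q) =
      LinearMap.range (Matrix.toEuclideanLin (matRe Q)) ⊔
        LinearMap.range (Matrix.toEuclideanLin (matIm Q)) ∧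
    LinearMap.range (Matrix.toEuclideanLin Q) =
      (LinearMap.ker (Matrix.toEuclideanLin Q))ᗮ := by
  have memker : ∀ (A : Matrix (Fin N) (Fin N) ℂ) (x : EuclideanSpace ℂ (Fin N)),
      x ∈ LinearMap.ker (Matrix.toEuclideanLin A) ↔ A *ᵥ (WithLp.equiv 2 _ x) = 0 := by
    intro A x
    rw [LinearMap.mem_ker, Matrix.toEuclideanLin_apply]
    constructor
    · intro hx
      have := congrArg (WithLp.equiv 2 (Fin N → ℂ)) hx
      simpa using this
    · intro hx; simp only [WithLp.equiv_apply] at hx; rw [hx]; simp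
  -- kernel of Q equals kernel of Qᴴ
  have hker1 : LinearMap.ker (Matrix.toEuclideanLin Q) =
      LinearMap.ker (Matrix.toEuclideanLin Qᴴ) := by
    ext x; rw [memker, memker]; exact key_iff Q h _
  -- kernel of Q equals intersection
  have hker2 : LinearMap.ker (Matrix.toEuclideanLin Q) =
      LinearMap.ker (Matrix.toEuclideanLin (matRe Q)) ⊓
        LinearMap.ker (Matrix.toEuclideanLin (matIm Q)) := by
    ext x
    rw [Submodule.mem_inf, memker, memker, memker]
    set v := WithLp.equiv 2 (Fin N → ℂ) x
    constructor
    · intro hQ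
      have hQH : Qᴴ *ᵥ v = 0 := (key_iff Q h v).mp hQ
      constructor
      · unfold matRe
        rw [smul_mulVec, add_mulVec, hQ, hQH]; simp
      · unfold matIm
        rw [smul_mulVec, sub_mulVec, hQ, hQH]; simp
    · rintro ⟨h1, h2⟩
      have := congrArg (fun M => M *ᵥ v) (matRe_add_I_smul_matIm Q)
      simpa [add_mulVec, smul_mulVec, h1, h2] using this.symm
  have hadj : LinearMap.adjoint (Matrix.toEuclideanLin Q) = Matrix.toEuclideanLin Qᴴ :=
    (Matrix.toEuclideanLin_conjTranspose_eq_adjoint Q).symm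
  have hrangeQ : LinearMap.range (Matrix.toEuclideanLin Q) =
      (LinearMap.ker (Matrix.toEuclideanLin Q))ᗮ := by
    rw [range_eq_ortho_ker_adjoint, hadj, ← hker1]
  have hrangeRe : LinearMap.range (Matrix.toEuclideanLin (matRe Q)) =
      (LinearMap.ker (Matrix.toEuclideanLin (matRe Q)))ᗮ := by
    rw [range_eq_ortho_ker_adjoint, ← Matrix.toEuclideanLin_conjTranspose_eq_adjoint,
      matRe_isHermitian Q]
  have hrangeIm : LinearMap.range (Matrix.toEuclideanLin (matIm Q)) =
      (LinearMap.ker (Matrix.toEuclideanLin (matIm Q)))ᗮ := by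
    rw [range_eq_ortho_ker_adjoint, ← Matrix.toEuclideanLin_conjTranspose_eq_adjoint,
      matIm_isHermitian Q]
  refine ⟨hker1, hker2, ?_, hrangeQ⟩
  rw [hrangeQ, hrangeRe, hrangeIm, hker2]
  set U := LinearMap.ker (Matrix.toEuclideanLin (matRe Q))
  set V := LinearMap.ker (Matrix.toEuclideanLin (matIm Q))
  conv_lhs => rw [← U.orthogonal_orthogonal, ← V.orthogonal_orthogonal]
  rw [Submodule.inf_orthogonal, Submodule.orthogonal_orthogonal]
end

section
/- Let P₀, P₁, M be N×N complex matrices and let c, c′ > 0 and C ≥ 0 be constants such that for all u ∈ ℂ^N: Re⟨M P₁ u, u⟩ ≥ c‖u‖² − C‖P₀ u‖² and Im⟨M P₀ u, u⟩ ≥ c′‖P₀ u‖². Then M is invertible. -/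
open Matrix

/-- **(Part of Proposition 4.7.)** If `P₀`, `P₁`, `M` are `N × N` complex matrices and there
are constants `c, c′ > 0` and `C ≥ 0` with `Re⟨M P₁ u, u⟩ ≥ c‖u‖² − C‖P₀ u‖²` and
`Im⟨M P₀ u, u⟩ ≥ c′‖P₀ u‖²` for all `u ∈ ℂ^N`, then `M` is invertible.
Here `⟨a, b⟩ = ⟪b, a⟫_ℂ` is linear in the first argument. -/
theorem symmetrizer_invertible {N : ℕ}
    (P₀ P₁ M : Matrix (Fin N) (Fin N) ℂ)
    (c c' C : ℝ) (hc : 0 < c) (hc' : 0 < c') (hC : 0 ≤ C)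
    (h1 : ∀ u : EuclideanSpace ℂ (Fin N),
      c * ‖u‖ ^ 2 - C * ‖Matrix.toEuclideanLin P₀ u‖ ^ 2 ≤
        (inner ℂ u (Matrix.toEuclideanLin (M * P₁) u) : ℂ).re)
    (h2 : ∀ u : EuclideanSpace ℂ (Fin N),
      c' * ‖Matrix.toEuclideanLin P₀ u‖ ^ 2 ≤
        (inner ℂ u (Matrix.toEuclideanLin (M * P₀) u) : ℂ).im) :
    IsUnit M := by
  have key : ∀ u : EuclideanSpace ℂ (Fin N),
      Matrix.toEuclideanLin Mᴴ u = 0 → u = 0 := by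
    intro u hu
    have hadj : LinearMap.adjoint (Matrix.toEuclideanLin M) u = 0 := by
      rw [← Matrix.toEuclideanLin_conjTranspose_eq_adjoint]; exact hu
    have hzero : ∀ A : Matrix (Fin N) (Fin N) ℂ,
        (inner ℂ u (Matrix.toEuclideanLin (M * A) u) : ℂ) = 0 := by
      intro A
      have hcomp : Matrix.toEuclideanLin (M * A) u
          = Matrix.toEuclideanLin M (Matrix.toEuclideanLin A u) := by
        simp [Matrix.toEuclideanLin_apply, Matrix.mulVec_mulVec]
      rw [hcomp, ← LinearMap.adjoint_inner_left, hadj, inner_zero_left]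
    have hP0 : ‖Matrix.toEuclideanLin P₀ u‖ = 0 := by
      by_contra h
      have hpos : 0 < ‖Matrix.toEuclideanLin P₀ u‖ ^ 2 :=
        pow_pos ((norm_nonneg _).lt_of_ne (Ne.symm h)) 2
      have := h2 u
      rw [hzero P₀] at this
      simp only [Complex.zero_im] at this
      nlinarith [mul_pos hc' hpos]
    have hu0 : ‖u‖ = 0 := by
      by_contra h
      have hpos : 0 < ‖u‖ ^ 2 := pow_pos ((norm_nonneg _).lt_of_ne (Ne.symm h)) 2
      have := h1 u
      rw [hzero P₁] at this
      simp only [Complex.zero_re] at this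
      rw [hP0] at this
      nlinarith [mul_pos hc hpos]
    exact norm_eq_zero.mp hu0
  have hinj : Function.Injective (Mᴴ.mulVec) := by
    intro x y hxy
    have h : Mᴴ *ᵥ (x - y) = 0 := by
      rw [Matrix.mulVec_sub, hxy, sub_self]
    have : ((WithLp.equiv 2 (Fin N → ℂ)).symm (x - y) : EuclideanSpace ℂ (Fin N)) = 0 := by
      apply key
      rw [WithLp.equiv_symm_apply, Matrix.toEuclideanLin_apply_piLp_toLp, h]
      simp
    have hxy0 : x - y = 0 := by
      simpa using congrArg (WithLp.equiv 2 (Fin N → ℂ)) this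
    exact sub_eq_zero.mp hxy0
  have : IsUnit Mᴴ := Matrix.mulVec_injective_iff_isUnit.mp hinj
  simpa using this
end

section
/- Let f : ℝ → ℝ be smooth with f ≥ 0, and assume there are c, R > 0 with f(t) ≥ c for all |t| ≥ R. Let μ > 0. Then the following are equivalent: (i) there exist C > 0 and δ₀ > 0 such that the Lebesgue measure of {t ∈ ℝ : f(t) ≤ δ} is at most Cδ^μ for all 0 < δ ≤ δ₀; (ii) there exists an even integer k ≥ 0 with kμ ≤ 1 such that Σ_{j=0}^{k} |f^{(j)}(t)| > 0 for every t ∈ ℝ. -/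
open MeasureTheory Set Nat

lemma iterWithin_eq {f : ℝ → ℝ} (hf : ContDiff ℝ (⊤:ℕ∞) f) {s : Set ℝ} {x : ℝ}
    (hs : UniqueDiffOn ℝ s) (hx : x ∈ s) (m : ℕ) :
    iteratedDerivWithin m f s x = iteratedDeriv m f x := by
  have h : HasFTaylorSeriesUpTo (m : ℕ∞) f (ftaylorSeries ℝ f) :=
    (contDiff_iff_ftaylorSeries.mp (hf.of_le (by exact_mod_cast le_top)))
  have h2 := (h.hasFTaylorSeriesUpToOn s).eq_iteratedFDerivWithin_of_uniqueDiffOn le_rfl hs hx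
  rw [iteratedDerivWithin_eq_iteratedFDerivWithin, iteratedDeriv_eq_iteratedFDeriv, ← h2]
  rfl

lemma taylor_zero_remainder {f : ℝ → ℝ} (hf : ContDiff ℝ (⊤:ℕ∞) f) {m : ℕ} (hm : 1 ≤ m)
    {t₀ x : ℝ} (hx : t₀ < x) (hz : ∀ j, j < m → iteratedDeriv j f t₀ = 0) :
    ∃ ξ ∈ Ioo t₀ x, f x = iteratedDeriv m f ξ * (x - t₀) ^ m / m ! := by
  obtain ⟨n, rfl⟩ : ∃ n, m = n + 1 := ⟨m - 1, (Nat.succ_pred_eq_of_pos hm).symm⟩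
  have hu : UniqueDiffOn ℝ (Icc t₀ x) := uniqueDiffOn_Icc hx
  have hfn : ContDiffOn ℝ n f (Icc t₀ x) :=
    (hf.of_le (by exact_mod_cast le_top)).contDiffOn
  have hf' : DifferentiableOn ℝ (iteratedDerivWithin n f (Icc t₀ x)) (Ioo t₀ x) := by
    apply DifferentiableOn.congr
      ((hf.differentiable_iteratedDeriv n (by exact_mod_cast lt_top_iff_ne_top.mpr (by simp))).differentiableOn)
    intro y hy
    exact iterWithin_eq hf hu (Ioo_subset_Icc_self hy) n
  obtain ⟨ξ, hξ, hT⟩ := taylor_mean_remainder_lagrange hx.ne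
    (by rwa [uIcc_of_le hx.le]) (by rwa [uIcc_of_le hx.le, uIoo_of_le hx.le])
  rw [uIoo_of_le hx.le] at hξ
  rw [uIcc_of_le hx.le] at hT
  refine ⟨ξ, hξ, ?_⟩
  have hP : taylorWithinEval f n (Icc t₀ x) t₀ x = 0 := by
    rw [taylor_within_apply]
    apply Finset.sum_eq_zero
    intro k hk
    rw [iterWithin_eq hf hu (left_mem_Icc.mpr hx.le) k, hz k (Finset.mem_range.mp hk), smul_zero]
  have hW : iteratedDerivWithin (n+1) f (Icc t₀ x) ξ = iteratedDeriv (n+1) f ξ :=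
    iterWithin_eq hf hu (Ioo_subset_Icc_self hξ) (n+1)
  rw [hP, sub_zero] at hT
  rw [hT, hW]

lemma iteratedDeriv_reflect {f : ℝ → ℝ} (n : ℕ) (s : ℝ) (x : ℝ) :
    iteratedDeriv n (fun t => f (s - t)) x = (-1:ℝ)^n * iteratedDeriv n f (s - x) := by
  have h1 : (fun t : ℝ => f (s - t)) = (fun t : ℝ => (fun y => f (s + y)) (-t)) := by
    funext t; simp [sub_eq_add_neg]
  have h := iteratedDeriv_comp_neg n (fun y => f (s + y)) x
  simp only [iteratedDeriv_comp_const_add, smul_eq_mul] at h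
  rw [h1]
  simpa [sub_eq_add_neg] using h
lemma local_structure {f : ℝ → ℝ} (hf : ContDiff ℝ (⊤:ℕ∞) f) (hf0 : ∀ t, 0 ≤ f t)
    {t₀ : ℝ} {m : ℕ} (hm : 1 ≤ m) (hz : ∀ j, j < m → iteratedDeriv j f t₀ = 0)
    (hd : iteratedDeriv m f t₀ ≠ 0) :
    Even m ∧ ∃ a : ℝ, 0 < a ∧ ∃ ε : ℝ, 0 < ε ∧
      ∀ x, |x - t₀| ≤ ε → a * (x - t₀) ^ m ≤ f x := by
  set F := iteratedDeriv m f with hF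
  set d := F t₀ with hdd
  have hcont : Continuous F := hf.continuous_iteratedDeriv m (by exact_mod_cast le_top)
  -- find ε
  obtain ⟨δ, hδ, hball⟩ := Metric.continuousAt_iff.mp hcont.continuousAt (|d|/2)
    (by positivity)
  set ε := δ/2 with hε
  have hεpos : 0 < ε := by positivity
  have hnear : ∀ y, |y - t₀| ≤ ε → |F y - d| < |d|/2 := by
    intro y hy
    have : dist y t₀ < δ := by
      rw [Real.dist_eq]; linarith
    simpa [Real.dist_eq] using hball this
  -- reflected function
  set g : ℝ → ℝ := fun t => f (2*t₀ - t) with hg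
  have hgc : ContDiff ℝ (⊤:ℕ∞) g := hf.comp (contDiff_const.sub contDiff_id)
  have hgz : ∀ j, j < m → iteratedDeriv j g t₀ = 0 := by
    intro j hj
    rw [hg, iteratedDeriv_reflect j (2*t₀) t₀]
    have : 2*t₀ - t₀ = t₀ := by ring
    rw [this, hz j hj, mul_zero]
  -- right-side Taylor values
  have hright : ∀ x, t₀ < x → x ≤ t₀ + ε →
      ∃ ξ, |ξ - t₀| ≤ ε ∧ t₀ < ξ ∧ f x = F ξ * (x - t₀) ^ m / m ! := by
    intro x hx1 hx2
    obtain ⟨ξ, hξ, hfx⟩ := taylor_zero_remainder hf hm hx1 hz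
    exact ⟨ξ, by rw [abs_sub_le_iff]; constructor <;> [linarith [hξ.1, hξ.2]; linarith [hξ.1]],
      hξ.1, hfx⟩
  -- d > 0
  have hdpos : 0 < d := by
    rcases lt_or_gt_of_ne hd with hneg | hpos
    · exfalso
      obtain ⟨ξ, hξε, hξgt, hfx⟩ := hright (t₀ + ε) (by linarith) le_rfl
      have hFξ : F ξ < d/2 := by
        have := hnear ξ hξε
        rw [abs_lt] at this
        cases abs_cases d with
        | inl h => linarith [h.1]
        | inr h => linarith [h.1]
      have hFneg : F ξ < 0 := by linarith
      have hpow : (0:ℝ) < (t₀ + ε - t₀) ^ m := by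
        have : (0:ℝ) < t₀ + ε - t₀ := by linarith
        positivity
      have : f (t₀ + ε) < 0 := by
        rw [hfx]
        apply div_neg_of_neg_of_pos (mul_neg_of_neg_of_pos hFneg hpow)
        exact_mod_cast Nat.factorial_pos m
      linarith [hf0 (t₀ + ε)]
    · exact hpos
  have hFlb : ∀ y, |y - t₀| ≤ ε → d/2 ≤ F y := by
    intro y hy
    have := hnear y hy
    rw [abs_lt, abs_of_pos hdpos] at this
    linarith [this.1]
  -- reflected m-th deriv
  have hgm : ∀ ξ : ℝ, iteratedDeriv m g ξ = (-1:ℝ)^m * F (2*t₀ - ξ) := fun ξ =>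
    iteratedDeriv_reflect m (2*t₀) ξ
  -- Even m
  have heven : Even m := by
    by_contra hodd
    rw [Nat.not_even_iff_odd] at hodd
    obtain ⟨ξ, hξ, hgx⟩ := taylor_zero_remainder hgc hm
      (show t₀ < t₀ + ε by linarith) hgz
    have hrefl : |2*t₀ - ξ - t₀| ≤ ε := by
      rw [abs_sub_le_iff]; constructor <;> [linarith [hξ.1, hξ.2]; linarith [hξ.1, hξ.2]]
    have hFlb' := hFlb _ hrefl
    have hpow : (0:ℝ) < (t₀ + ε - t₀) ^ m := by
      have : (0:ℝ) < t₀ + ε - t₀ := by linarith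
      positivity
    have hneg : g (t₀ + ε) < 0 := by
      rw [hgx, hgm ξ, hodd.neg_one_pow]
      have h1 : -1 * F (2*t₀ - ξ) < 0 := by nlinarith
      apply div_neg_of_neg_of_pos (mul_neg_of_neg_of_pos h1 hpow)
      exact_mod_cast Nat.factorial_pos m
    have : 0 ≤ g (t₀ + ε) := hf0 _
    linarith
  -- lower bound
  refine ⟨heven, d / (2 * m !), by positivity, ε, hεpos, ?_⟩
  intro x hx
  rcases lt_trichotomy x t₀ with hlt | heq | hgt
  · -- use g
    have hx' : t₀ < 2*t₀ - x := by linarith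
    have hx'' : 2*t₀ - x ≤ t₀ + ε := by
      rw [abs_sub_le_iff] at hx; linarith [hx.2]
    obtain ⟨ξ, hξ, hgx⟩ := taylor_zero_remainder hgc hm hx' hgz
    have hrefl : |2*t₀ - ξ - t₀| ≤ ε := by
      rw [abs_sub_le_iff]; constructor <;> [linarith [hξ.1, hξ.2]; linarith [hξ.1, hξ.2]]
    have hFlb' := hFlb _ hrefl
    have hfx : f x = F (2*t₀ - ξ) * (2*t₀ - x - t₀) ^ m / m ! := by
      have : f x = g (2*t₀ - x) := by rw [hg]; norm_num
      rw [this, hgx, hgm ξ, heven.neg_one_pow, one_mul]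
    have hpowe : (2*t₀ - x - t₀) ^ m = (x - t₀) ^ m := by
      have h1 : 2*t₀ - x - t₀ = -(x - t₀) := by ring
      rw [h1, heven.neg_pow]
    have hpow0 : (0:ℝ) ≤ (x - t₀) ^ m := heven.pow_nonneg _
    rw [hfx, hpowe]
    have hfac : (0:ℝ) < (m ! : ℝ) := by exact_mod_cast Nat.factorial_pos m
    calc d / (2 * ↑m !) * (x - t₀) ^ m = d / 2 * (x - t₀) ^ m / ↑m ! := by
            field_simp
      _ ≤ F (2 * t₀ - ξ) * (x - t₀) ^ m / ↑m ! := by gcongr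
  · rw [← heq]
    simp only [sub_self]
    rw [zero_pow (by omega), mul_zero]
    exact hf0 x
  · obtain ⟨ξ, hξε, hξgt, hfx⟩ := hright x hgt (by rw [abs_sub_le_iff] at hx; linarith [hx.1])
    have hFlb' := hFlb _ hξε
    have hpow0 : (0:ℝ) ≤ (x - t₀) ^ m := heven.pow_nonneg _
    rw [hfx]
    have hfac : (0:ℝ) < (m ! : ℝ) := by exact_mod_cast Nat.factorial_pos m
    calc d / (2 * ↑m !) * (x - t₀) ^ m = d / 2 * (x - t₀) ^ m / ↑m ! := by
            field_simp
      _ ≤ F ξ * (x - t₀) ^ m / ↑m ! := by gcongr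

/-- **Proposition A.1.** Let `f : ℝ → ℝ` be smooth with `f ≥ 0` and `f(t) ≥ c > 0` for
`|t| ≥ R`. Then, for `μ > 0`, the sublevel-set measure estimate
`|{t : f(t) ≤ δ}| ≤ C δ^μ` for small `δ` holds if and only if there is an even integer
`k ≥ 0` with `kμ ≤ 1` such that `Σ_{j≤k} |f^{(j)}(t)| > 0` for every `t`. -/
theorem sublevel_measure_iff_finite_order
    (f : ℝ → ℝ) (hf : ContDiff ℝ (⊤ : ℕ∞) f) (hf0 : ∀ t, 0 ≤ f t)
    (c R : ℝ) (hc : 0 < c) (hR : 0 < R) (hinf : ∀ t : ℝ, R ≤ |t| → c ≤ f t)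
    (μ : ℝ) (hμ : 0 < μ) :
    (∃ C : ℝ, 0 < C ∧ ∃ δ₀ : ℝ, 0 < δ₀ ∧ ∀ δ : ℝ, 0 < δ → δ ≤ δ₀ →
        volume {t : ℝ | f t ≤ δ} ≤ ENNReal.ofReal (C * δ ^ μ)) ↔
    (∃ k : ℕ, Even k ∧ (k : ℝ) * μ ≤ 1 ∧
        ∀ t : ℝ, 0 < ∑ j ∈ Finset.range (k + 1), |iteratedDeriv j f t|) := by
  constructor
  · -- forward
    rintro ⟨C, hC, δ₀, hδ₀, hbound⟩
    set n := ⌊1/(2*μ)⌋₊ with hn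
    refine ⟨2*n, even_two_mul n, ?_, ?_⟩
    · have h1 : (n:ℝ) ≤ 1/(2*μ) := Nat.floor_le (by positivity)
      have : (2*n : ℝ) * μ ≤ 1 := by
        have h2 : (1/(2*μ)) * (2*μ) = 1 := by field_simp
        nlinarith [mul_le_mul_of_nonneg_right h1 (by positivity : (0:ℝ) ≤ 2*μ)]
      exact_mod_cast this
    · intro t₀
      by_contra hcon
      have hsum0 : ∑ j ∈ Finset.range (2*n + 1), |iteratedDeriv j f t₀| = 0 :=
        le_antisymm (not_lt.mp hcon) (Finset.sum_nonneg fun _ _ => abs_nonneg _)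
      have hall : ∀ j, j ≤ 2*n → iteratedDeriv j f t₀ = 0 := by
        intro j hj
        have := (Finset.sum_eq_zero_iff_of_nonneg (fun i _ => abs_nonneg _)).mp hsum0 j
          (Finset.mem_range.mpr (by omega))
        exact abs_eq_zero.mp this
      have hodd : iteratedDeriv (2*n+1) f t₀ = 0 := by
        by_contra hne
        have heven := (local_structure hf hf0 (by omega)
          (fun j hj => hall j (by omega)) hne).1
        obtain ⟨p, hp⟩ := heven
        omega
      set q := 2*n+2 with hq
      have hz : ∀ j, j < q → iteratedDeriv j f t₀ = 0 := by
        intro j hj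
        rcases Nat.lt_or_ge j (2*n+1) with h | h
        · exact hall j (by omega)
        · have : j = 2*n+1 := by omega
          rw [this]; exact hodd
      clear_value q
      obtain ⟨M₀, hM₀⟩ := (isCompact_Icc (a := t₀) (b := t₀+1)).exists_bound_of_continuousOn
        (hf.continuous_iteratedDeriv q (by exact_mod_cast (le_top : (q:ℕ∞) ≤ ⊤))).continuousOn
      set M : ℝ := |M₀| / q ! + 1 with hM
      clear_value M
      have hMpos : 0 < M := by
        rw [hM]; positivity
      have hup : ∀ x, t₀ < x → x ≤ t₀ + 1 → f x ≤ M * (x - t₀)^q := by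
        intro x hx1 hx2
        obtain ⟨ξ, hξ, hfx⟩ := taylor_zero_remainder hf (by omega) hx1 hz
        have hξmem : ξ ∈ Icc t₀ (t₀+1) := ⟨hξ.1.le, by linarith [hξ.2]⟩
        have hb : iteratedDeriv q f ξ ≤ |M₀| :=
          le_trans (le_abs_self _) ((hM₀ ξ hξmem).trans (le_abs_self M₀))
        have hpow : (0:ℝ) ≤ (x - t₀)^q := pow_nonneg (by linarith) q
        have hfac : (0:ℝ) < (q ! : ℝ) := by exact_mod_cast Nat.factorial_pos q
        rw [hfx]
        calc iteratedDeriv q f ξ * (x - t₀) ^ q / q !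
            ≤ |M₀| * (x - t₀) ^ q / q ! := by gcongr
          _ = (|M₀| / q !) * (x - t₀) ^ q := by ring
          _ ≤ M * (x - t₀) ^ q := by
              apply mul_le_mul_of_nonneg_right _ hpow
              linarith
      have hqμ : 1 < (q:ℝ) * μ := by
        have h2 : 1/(2*μ) < (n:ℝ) + 1 := Nat.lt_floor_add_one _
        rw [div_lt_iff₀ (by positivity)] at h2
        rw [hq]
        push_cast
        nlinarith
      have hqpos : (0:ℝ) < (q:ℝ) := by exact_mod_cast (show 0 < q by omega)
      set e := μ - (q:ℝ)⁻¹ with he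
      clear_value e
      have h4 : 1/(q:ℝ) < μ := by
        rw [div_lt_iff₀ hqpos]
        nlinarith
      have hepos : 0 < e := by
        rw [he, sub_pos, inv_eq_one_div]
        exact h4
      set B := C * M ^ ((q:ℝ)⁻¹) with hB
      clear_value B
      have hBpos : 0 < B := by rw [hB]; exact mul_pos hC (Real.rpow_pos_of_pos hMpos _)
      set δ₂ := (1/B) ^ (e⁻¹ : ℝ) with hδ₂
      clear_value δ₂
      have hδ₂pos : 0 < δ₂ := by rw [hδ₂]; exact Real.rpow_pos_of_pos (one_div_pos.mpr hBpos) _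
      set δ := min δ₀ (min M δ₂) / 2 with hδ
      clear_value δ
      have hmin3 : 0 < min δ₀ (min M δ₂) := lt_min hδ₀ (lt_min hMpos hδ₂pos)
      have hδpos : 0 < δ := by rw [hδ]; linarith
      have hδδ₀ : δ ≤ δ₀ := by
        have h1 := min_le_left δ₀ (min M δ₂)
        rw [hδ]; linarith
      have hδM : δ ≤ M := by
        have h1 := min_le_right δ₀ (min M δ₂)
        have h2 := min_le_left M δ₂
        rw [hδ]; linarith
      have hδ2 : δ < δ₂ := by
        have h1 := min_le_right δ₀ (min M δ₂)
        have h2 := min_le_right M δ₂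
        rw [hδ]; linarith
      set r := (δ/M) ^ ((q:ℝ)⁻¹ : ℝ) with hr
      clear_value r
      have hrpos : 0 < r := by rw [hr]; exact Real.rpow_pos_of_pos (div_pos hδpos hMpos) _
      have hr1 : r ≤ 1 := by
        rw [hr]
        exact Real.rpow_le_one (div_nonneg hδpos.le hMpos.le) ((div_le_one hMpos).mpr hδM)
          (by positivity)
      have hrq : r ^ q = δ / M := by
        rw [hr, ← Real.rpow_natCast ((δ/M) ^ ((q:ℝ)⁻¹ : ℝ)) q, ← Real.rpow_mul (by positivity),
          inv_mul_cancel₀ (by positivity), Real.rpow_one]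
      have hsub : Icc t₀ (t₀ + r) ⊆ {t | f t ≤ δ} := by
        intro x hx
        rcases eq_or_lt_of_le hx.1 with heq | hlt
        · show f x ≤ δ
          rw [← heq]
          have h0 := hz 0 (by omega)
          rw [iteratedDeriv_zero] at h0
          rw [h0]; exact hδpos.le
        · show f x ≤ δ
          have hb := hup x hlt (by linarith [hx.2, hr1])
          have hxr : x - t₀ ≤ r := by linarith [hx.2]
          have hxp : (0:ℝ) ≤ x - t₀ := by linarith
          calc f x ≤ M * (x - t₀)^q := hb
            _ ≤ M * r ^ q := by gcongr
            _ = δ := by rw [hrq]; field_simp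
      have hvol : ENNReal.ofReal r ≤ volume {t : ℝ | f t ≤ δ} := by
        have := measure_mono (μ := volume) hsub
        rwa [Real.volume_Icc, add_sub_cancel_left] at this
      have hkey : r ≤ C * δ ^ μ := by
        have h1 := hvol.trans (hbound δ hδpos hδδ₀)
        exact (ENNReal.ofReal_le_ofReal_iff (by positivity)).mp h1
      have h1 : δ ^ ((q:ℝ)⁻¹ : ℝ) ≤ B * δ ^ μ := by
        have hMq : (0:ℝ) < M ^ ((q:ℝ)⁻¹ : ℝ) := Real.rpow_pos_of_pos hMpos _
        rw [hr, Real.div_rpow hδpos.le hMpos.le] at hkey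
        calc δ ^ ((q:ℝ)⁻¹ : ℝ) = (δ ^ ((q:ℝ)⁻¹ : ℝ) / M ^ ((q:ℝ)⁻¹ : ℝ)) * M ^ ((q:ℝ)⁻¹ : ℝ) := by
              field_simp
          _ ≤ (C * δ ^ μ) * M ^ ((q:ℝ)⁻¹ : ℝ) := mul_le_mul_of_nonneg_right hkey hMq.le
          _ = B * δ ^ μ := by rw [hB]; ring
      have h2 : 1 ≤ B * δ ^ e := by
        have hsplit : δ ^ μ = δ ^ e * δ ^ ((q:ℝ)⁻¹ : ℝ) := by
          rw [← Real.rpow_add hδpos]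
          congr 1
          rw [he]; ring
        rw [hsplit] at h1
        have hq2 : (0:ℝ) < δ ^ ((q:ℝ)⁻¹ : ℝ) := Real.rpow_pos_of_pos hδpos _
        nlinarith
      have h3 : B * δ ^ e < 1 := by
        have hlt : δ ^ e < δ₂ ^ e := Real.rpow_lt_rpow hδpos.le hδ2 hepos
        have heq2 : δ₂ ^ e = 1/B := by
          rw [hδ₂, ← Real.rpow_mul (by positivity), inv_mul_cancel₀ hepos.ne', Real.rpow_one]
        calc B * δ ^ e < B * (1/B) := by
              apply mul_lt_mul_of_pos_left _ hBpos
              rw [← heq2]; exact hlt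
          _ = 1 := by field_simp
      linarith
  · -- backward
    rintro ⟨k, hkeven, hkμ, hS⟩
    classical
    set K : Set ℝ := {t | f t = 0} with hK
    have hKsub : K ⊆ Icc (-R) R := by
      intro t ht
      by_contra hni
      rw [mem_Icc, not_and_or, not_le, not_le] at hni
      have hR' : R ≤ |t| := by
        rcases hni with h | h
        · rw [le_abs]; right; linarith
        · rw [le_abs]; left; linarith
      have := hinf t hR'
      have ht0 : f t = 0 := ht
      linarith
    have hKcl : IsClosed K := isClosed_eq hf.continuous continuous_const
    have hKcpt : IsCompact K := isCompact_Icc.of_isClosed_subset hKcl hKsub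
    have hdata : ∀ z : K, ∃ m : ℕ, (1 ≤ m ∧ (m:ℝ) * μ ≤ 1 ∧ Even m) ∧ ∃ a : ℝ, 0 < a ∧
        ∃ ε : ℝ, 0 < ε ∧ ∀ x, |x - (z:ℝ)| ≤ ε → a * (x - (z:ℝ)) ^ m ≤ f x := by
      rintro ⟨t₀, ht₀⟩
      have h00 : f t₀ = 0 := ht₀
      have h0 : iteratedDeriv 0 f t₀ = 0 := by simpa using h00
      have hex : ∃ j, j ≤ k ∧ iteratedDeriv j f t₀ ≠ 0 := by
        by_contra hcon
        push_neg at hcon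
        have : ∑ j ∈ Finset.range (k+1), |iteratedDeriv j f t₀| = 0 :=
          Finset.sum_eq_zero fun j hj => by
            rw [hcon j (Nat.lt_succ_iff.mp (Finset.mem_range.mp hj)), abs_zero]
        linarith [hS t₀]
      have hexP : ∃ j, iteratedDeriv j f t₀ ≠ 0 := ⟨hex.choose, hex.choose_spec.2⟩
      set m := Nat.find hexP with hm
      have hmne : iteratedDeriv m f t₀ ≠ 0 := Nat.find_spec hexP
      have hz : ∀ j, j < m → iteratedDeriv j f t₀ = 0 := fun j hj =>
        not_not.mp (Nat.find_min hexP hj)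
      have hm1 : 1 ≤ m := by
        rcases Nat.eq_zero_or_pos m with h | h
        · exact absurd (h ▸ hmne) (by simp [h0])
        · exact h
      have hmk : m ≤ k := Nat.find_min' hexP hex.choose_spec.2 |>.trans hex.choose_spec.1
      obtain ⟨heven, a, ha, ε, hε, hlb⟩ := local_structure hf hf0 hm1 hz hmne
      refine ⟨m, ⟨hm1, ?_, heven⟩, a, ha, ε, hε, hlb⟩
      have : (m:ℝ) ≤ (k:ℝ) := by exact_mod_cast hmk
      nlinarith
    choose mz hmz az haz εz hεz hlb using hdata
    obtain ⟨s, hs⟩ := hKcpt.elim_finite_subcover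
      (fun z : K => Ioo ((z:ℝ) - εz z) ((z:ℝ) + εz z)) (fun z => isOpen_Ioo)
      (by
        intro t ht
        exact Set.mem_iUnion.mpr ⟨⟨t, ht⟩, by
          simp only [Set.mem_Ioo]
          constructor <;> [linarith [hεz ⟨t, ht⟩]; linarith [hεz ⟨t, ht⟩]]⟩)
    set U : Set ℝ := ⋃ z ∈ s, Ioo ((z:ℝ) - εz z) ((z:ℝ) + εz z) with hU
    set D : Set ℝ := Icc (-R) R \ U with hDdef
    have hDcpt : IsCompact D :=
      isCompact_Icc.diff (isOpen_biUnion fun _ _ => isOpen_Ioo)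
    have hc₁ : ∃ c₁ : ℝ, 0 < c₁ ∧ ∀ t ∈ D, c₁ ≤ f t := by
      rcases D.eq_empty_or_nonempty with hDe | hDne
      · exact ⟨1, one_pos, by rw [hDe]; simp⟩
      · obtain ⟨u, huD, hmin⟩ := hDcpt.exists_isMinOn hDne hf.continuous.continuousOn
        refine ⟨f u, ?_, fun t ht => isMinOn_iff.mp hmin t ht⟩
        rcases (hf0 u).lt_or_eq with h | h
        · exact h
        · exfalso
          have huK : u ∈ K := by rw [hK]; exact h.symm
          have := hs huK
          exact huD.2 this
    obtain ⟨c₁, hc₁pos, hc₁⟩ := hc₁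
    refine ⟨1 + ∑ z ∈ s, 2 / (az z) ^ ((mz z : ℝ)⁻¹), by
      have : (0:ℝ) ≤ ∑ z ∈ s, 2 / (az z) ^ ((mz z : ℝ)⁻¹) :=
        Finset.sum_nonneg fun z _ => div_nonneg (by norm_num) (Real.rpow_nonneg (haz z).le _)
      linarith, min (min c c₁) 1 / 2, by
      have := lt_min (lt_min hc hc₁pos) one_pos
      linarith, ?_⟩
    intro δ hδpos hδle
    have hδc : δ < c := by
      have h1 := min_le_left (min c c₁) 1
      have h2 := min_le_left c c₁
      have h3 := lt_min (lt_min hc hc₁pos) one_pos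
      linarith
    have hδc₁ : δ < c₁ := by
      have h1 := min_le_left (min c c₁) 1
      have h2 := min_le_right c c₁
      have h3 := lt_min (lt_min hc hc₁pos) one_pos
      linarith
    have hδ1 : δ ≤ 1 := by
      have h1 := min_le_right (min c c₁) 1
      have h3 := lt_min (lt_min hc hc₁pos) one_pos
      linarith
    -- radius
    have hsub : {t : ℝ | f t ≤ δ} ⊆
        ⋃ z ∈ s, Icc ((z:ℝ) - (δ / az z) ^ ((mz z : ℝ)⁻¹)) ((z:ℝ) + (δ / az z) ^ ((mz z : ℝ)⁻¹)) := by
      intro t ht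
      have htf : f t ≤ δ := ht
      have htIcc : t ∈ Icc (-R) R := by
        by_contra hni
        rw [mem_Icc, not_and_or, not_le, not_le] at hni
        have hR' : R ≤ |t| := by
          rcases hni with h | h
          · rw [le_abs]; right; linarith
          · rw [le_abs]; left; linarith
        linarith [hinf t hR']
      have htU : t ∈ U := by
        by_contra htU
        have htD : t ∈ D := ⟨htIcc, htU⟩
        linarith [hc₁ t htD]
      rw [hU] at htU
      obtain ⟨z, hzs, htz⟩ := Set.mem_iUnion₂.mp htU
      have habs : |t - (z:ℝ)| ≤ εz z := by
        rw [Set.mem_Ioo] at htz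
        rw [abs_sub_le_iff]
        constructor <;> linarith [htz.1, htz.2]
      have hfl := hlb z t habs
      have hple : (t - (z:ℝ)) ^ (mz z) ≤ δ / az z := by
        rw [le_div_iff₀ (haz z)]
        nlinarith [haz z]
      have hmz0 : mz z ≠ 0 := by have := (hmz z).1; omega
      have hre : |t - (z:ℝ)| ≤ (δ / az z) ^ ((mz z : ℝ)⁻¹) := by
        have hp0 : (0:ℝ) ≤ |t - (z:ℝ)| := abs_nonneg _
        have hpm : |t - (z:ℝ)| ^ (mz z) = (t - (z:ℝ)) ^ (mz z) :=
          ((hmz z).2.2).pow_abs _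
        have h1 : (|t - (z:ℝ)| ^ (mz z) : ℝ) ^ ((mz z : ℝ)⁻¹) ≤ (δ / az z) ^ ((mz z : ℝ)⁻¹) := by
          apply Real.rpow_le_rpow (by positivity) _ (by positivity)
          rw [hpm]; exact hple
        rwa [← Real.rpow_natCast |t - (z:ℝ)| (mz z), ← Real.rpow_mul hp0,
          mul_inv_cancel₀ (by exact_mod_cast hmz0), Real.rpow_one] at h1
      refine Set.mem_iUnion₂.mpr ⟨z, hzs, ?_⟩
      rw [mem_Icc]
      rw [abs_sub_le_iff] at hre
      constructor <;> linarith [hre.1, hre.2]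
    calc volume {t : ℝ | f t ≤ δ}
        ≤ volume (⋃ z ∈ s, Icc ((z:ℝ) - (δ / az z) ^ ((mz z : ℝ)⁻¹))
            ((z:ℝ) + (δ / az z) ^ ((mz z : ℝ)⁻¹))) := measure_mono hsub
      _ ≤ ∑ z ∈ s, volume (Icc ((z:ℝ) - (δ / az z) ^ ((mz z : ℝ)⁻¹))
            ((z:ℝ) + (δ / az z) ^ ((mz z : ℝ)⁻¹))) := measure_biUnion_finset_le s _
      _ = ∑ z ∈ s, ENNReal.ofReal (2 * (δ / az z) ^ ((mz z : ℝ)⁻¹)) := by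
          apply Finset.sum_congr rfl
          intro z _
          rw [Real.volume_Icc]
          congr 1
          ring
      _ = ENNReal.ofReal (∑ z ∈ s, 2 * (δ / az z) ^ ((mz z : ℝ)⁻¹)) := by
          rw [ENNReal.ofReal_sum_of_nonneg fun z _ =>
            mul_nonneg (by norm_num) (Real.rpow_nonneg (div_nonneg hδpos.le (haz z).le) _)]
      _ ≤ ENNReal.ofReal ((1 + ∑ z ∈ s, 2 / (az z) ^ ((mz z : ℝ)⁻¹)) * δ ^ μ) := by
          apply ENNReal.ofReal_le_ofReal
          have hterm : ∀ z ∈ s, 2 * (δ / az z) ^ ((mz z : ℝ)⁻¹)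
              ≤ (2 / (az z) ^ ((mz z : ℝ)⁻¹)) * δ ^ μ := by
            intro z _
            have hmz0 : (0:ℝ) < (mz z : ℝ) := by
              have := (hmz z).1; exact_mod_cast by omega
            have hdiv : (δ / az z) ^ ((mz z : ℝ)⁻¹)
                = δ ^ ((mz z : ℝ)⁻¹) / (az z) ^ ((mz z : ℝ)⁻¹) :=
              Real.div_rpow hδpos.le (haz z).le _
            have hexp : δ ^ ((mz z : ℝ)⁻¹) ≤ δ ^ μ := by
              apply Real.rpow_le_rpow_of_exponent_ge hδpos hδ1
              rw [inv_eq_one_div, le_div_iff₀ hmz0]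
              have := (hmz z).2.1
              linarith [mul_comm μ (mz z : ℝ)]
            rw [hdiv]
            rw [div_eq_mul_inv, div_eq_mul_inv]
            have hap : (0:ℝ) < (az z) ^ ((mz z : ℝ)⁻¹) := Real.rpow_pos_of_pos (haz z) _
            calc 2 * (δ ^ ((mz z : ℝ)⁻¹) * ((az z) ^ ((mz z : ℝ)⁻¹))⁻¹)
                ≤ 2 * (δ ^ μ * ((az z) ^ ((mz z : ℝ)⁻¹))⁻¹) := by
                  apply mul_le_mul_of_nonneg_left _ (by norm_num)
                  exact mul_le_mul_of_nonneg_right hexp (by positivity)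
              _ = 2 * ((az z) ^ ((mz z : ℝ)⁻¹))⁻¹ * δ ^ μ := by ring
          have hsum := Finset.sum_le_sum hterm
          have hpos : (0:ℝ) ≤ δ ^ μ := Real.rpow_nonneg hδpos.le μ
          calc ∑ z ∈ s, 2 * (δ / az z) ^ ((mz z : ℝ)⁻¹)
              ≤ ∑ z ∈ s, (2 / (az z) ^ ((mz z : ℝ)⁻¹)) * δ ^ μ := hsum
            _ = (∑ z ∈ s, 2 / (az z) ^ ((mz z : ℝ)⁻¹)) * δ ^ μ := by
                rw [Finset.sum_mul]
            _ ≤ (1 + ∑ z ∈ s, 2 / (az z) ^ ((mz z : ℝ)⁻¹)) * δ ^ μ := by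
                apply mul_le_mul_of_nonneg_right _ hpos
                linarith
end
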